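/- If 2 ≤ a ≤ d, a ≤ b, and (a-1) divides (d-1), then the maximum of ∑_{i=1}^{b} x_i over non-increasing sequences of positive integers with ∑_{i=1}^{a-1} x_i ≤ d-1 equals b·(d-1)/(a-1). -/

import Mathlib

open Finset

theorem stmt2 (a b d : ℕ) (ha : 2 ≤ a) (had : a ≤ d) (hab : a ≤ b)
    (hdvd : (a - 1) ∣ (d - 1)) :
    IsGreatest {S : ℕ | ∃ x : ℕ → ℕ,
        (∀ i, i < b → 1 ≤ x i) ∧ (∀ i j, i ≤ j → j < b → x j ≤ x i) ∧
        (∑ i ∈ Finset.range (a - 1), x i) ≤ d - 1 ∧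
        S = ∑ i ∈ Finset.range b, x i}
      (b * ((d - 1) / (a - 1))) := by
  obtain ⟨q, hq⟩ := hdvd
  have hm : 1 ≤ a - 1 := by omega
  have hq1 : 1 ≤ q := by
    rcases Nat.eq_zero_or_pos q with h | h
    · subst h; simp at hq; omega
    · exact h
  have hdiv : (d - 1) / (a - 1) = q := by
    rw [hq, Nat.mul_div_cancel_left _ (by omega)]
  rw [hdiv]
  constructor
  · refine ⟨fun _ => q, fun i _ => hq1, fun i j _ _ => le_rfl, ?_, ?_⟩
    · simp [Finset.sum_const, hq]
    · simp [Finset.sum_const, mul_comm]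
  · rintro S ⟨x, hpos, hmono, hsum, rfl⟩
    have hlast : x (a - 2) ≤ q := by
      have h1 : (a - 1) * x (a - 2) ≤ ∑ i ∈ Finset.range (a - 1), x i := by
        calc (a - 1) * x (a - 2) = ∑ _i ∈ Finset.range (a - 1), x (a - 2) := by
              simp [Finset.sum_const, mul_comm]
          _ ≤ ∑ i ∈ Finset.range (a - 1), x i := by
              refine Finset.sum_le_sum fun i hi => ?_
              exact hmono i (a - 2) (by simp at hi; omega) (by omega)
      have h2 : (a - 1) * x (a - 2) ≤ (a - 1) * q := by omega
      exact Nat.le_of_mul_le_mul_left h2 (by omega)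
    have hsplit : Finset.range b = Finset.range (a - 1) ∪ Finset.Ico (a - 1) b := by
      ext i; simp only [Finset.mem_range, Finset.mem_union, Finset.mem_Ico]; omega
    rw [hsplit, Finset.sum_union (by
      simp [Finset.disjoint_left, Finset.mem_Ico]; omega)]
    have h3 : ∑ i ∈ Finset.Ico (a - 1) b, x i ≤ (b - (a - 1)) * q := by
      calc ∑ i ∈ Finset.Ico (a - 1) b, x i ≤ ∑ _i ∈ Finset.Ico (a - 1) b, q := by
            refine Finset.sum_le_sum fun i hi => ?_
            simp only [Finset.mem_Ico] at hi
            exact le_trans (hmono (a - 2) i (by omega) hi.2) hlast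
        _ = (b - (a - 1)) * q := by simp [Finset.sum_const, mul_comm, Nat.card_Ico]
    have : (a - 1) * q + (b - (a - 1)) * q = b * q := by
      rw [← Nat.add_mul]; congr 1; omega
    omega
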